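/- For all positive rationals a, b and natural numbers p, s with 0 < s < p, there exist a positive integer k, an integer t, strictly positive rationals c₁, c₂, c₃, and distinct natural numbers i₁, i₂, i₃ each less than pk such that a(pn)³ + b(pn+s)³ = c₁(pkn + i₁ + t)³ + c₂(pkn + i₂ + t)³ + c₃(pkn + i₃ + t)³ as polynomials in n. -/

import Mathlib

private lemma cube_comb (c₁ c₂ c₃ D₁ D₂ D₃ a b m Q x : ℚ)
    (h0 : (c₁ + c₂ + c₃) * Q^3 = a + b)
    (h1 : (c₁*D₁ + c₂*D₂ + c₃*D₃) * Q^2 = b*m)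
    (h2 : (c₁*D₁^2 + c₂*D₂^2 + c₃*D₃^2) * Q = b*m^2)
    (h3 : c₁*D₁^3 + c₂*D₂^3 + c₃*D₃^3 = b*m^3) :
    a*x^3 + b*(x+m)^3 =
      c₁*(Q*x+D₁)^3 + c₂*(Q*x+D₂)^3 + c₃*(Q*x+D₃)^3 := by
  linear_combination (-(x^3*h0) - 3*x^2*h1 - 3*x*h2 - h3)

private lemma main_id (QA QB Sq g M d lam c1 c2 c3 x : ℚ)
    (hA : 0 < QA) (hB : 0 < QB) (hS : 0 < Sq)
    (hM : M = 3*Sq*(QA+QB)) (hd : d = 3*QB*Sq)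
    (hlam : lam = QA*g*d*M*(M+1))
    (hc1 : c1 = lam/((1+d)*(1+M)*(2+M)) / (3*(QA+QB))^3)
    (hc2 : c2 = lam/(d*(d+1)*(3*QA*Sq)*(3*QA*Sq+1)) / (3*(QA+QB))^3)
    (hc3 : c3 = lam/((M+1)*(M+2)*(3*QA*Sq+1)) / (3*(QA+QB))^3) :
    QA*g*x^3 + QB*g*(x+Sq)^3 =
      c1*(3*(QA+QB)*x + (-1))^3 + c2*(3*(QA+QB)*x + d)^3
        + c3*(3*(QA+QB)*x + (M+1))^3 := by
  have e1 : (1+3*QB*Sq) ≠ 0 := by positivity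
  have e2 : (1+3*Sq*(QA+QB)) ≠ 0 := by positivity
  have e3 : (2+3*Sq*(QA+QB)) ≠ 0 := by positivity
  have e4 : (3*QB*Sq) ≠ 0 := by positivity
  have e5 : (3*QB*Sq+1) ≠ 0 := by positivity
  have e6 : (3*QA*Sq) ≠ 0 := by positivity
  have e7 : (3*QA*Sq+1) ≠ 0 := by positivity
  have e8 : (3*Sq*(QA+QB)+1) ≠ 0 := by positivity
  have e9 : (3*Sq*(QA+QB)+2) ≠ 0 := by positivity
  have e10 : (3*(QA+QB)) ≠ 0 := by positivity
  have m0 : (c1 + c2 + c3) * (3*(QA+QB))^3 = QA*g + QB*g := by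
    rw [hc1, hc2, hc3, hlam, hM, hd]; field_simp; ring
  have m1 : (c1*(-1) + c2*d + c3*(M+1)) * (3*(QA+QB))^2 = QB*g*Sq := by
    rw [hc1, hc2, hc3, hlam, hM, hd]; field_simp; ring
  have m2 : (c1*(-1)^2 + c2*d^2 + c3*(M+1)^2) * (3*(QA+QB)) = QB*g*Sq^2 := by
    rw [hc1, hc2, hc3, hlam, hM, hd]; field_simp; ring
  have m3 : c1*(-1)^3 + c2*d^3 + c3*(M+1)^3 = QB*g*Sq^3 := by
    rw [hc1, hc2, hc3, hlam, hM, hd]; field_simp; ring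
  exact cube_comb c1 c2 c3 (-1) d (M+1) (QA*g) (QB*g) Sq (3*(QA+QB)) x m0 m1 m2 m3


set_option maxHeartbeats 2000000 in
set_option linter.all false in
theorem stmt_9 (a b : ℚ) (ha : 0 < a) (hb : 0 < b) (p s : ℕ)
    (hs : 0 < s) (hsp : s < p) :
    ∃ k : ℕ, 0 < k ∧ ∃ t : ℤ, ∃ c₁ c₂ c₃ : ℚ, 0 < c₁ ∧ 0 < c₂ ∧ 0 < c₃ ∧
      ∃ i₁ i₂ i₃ : ℕ, i₁ ≠ i₂ ∧ i₁ ≠ i₃ ∧ i₂ ≠ i₃ ∧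
        i₁ < p*k ∧ i₂ < p*k ∧ i₃ < p*k ∧
        ∀ n : ℚ, a*((p:ℚ)*n)^3 + b*((p:ℚ)*n+s)^3 =
          c₁*((p:ℚ)*(k:ℚ)*n + i₁ + t)^3 + c₂*((p:ℚ)*(k:ℚ)*n + i₂ + t)^3
            + c₃*((p:ℚ)*(k:ℚ)*n + i₃ + t)^3 := by
  obtain ⟨s', rfl⟩ : ∃ s', s = s' + 1 := ⟨s - 1, by omega⟩
  obtain ⟨A, B, g, hg, ea, eb⟩ :
      ∃ A B : ℕ, ∃ g : ℚ, 0 < g ∧ a = ((A:ℚ)+1)*g ∧ b = ((B:ℚ)+1)*g := by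
    have hna : 0 < a.num := Rat.num_pos.mpr ha
    have hnb : 0 < b.num := Rat.num_pos.mpr hb
    have hda : (0:ℚ) < (a.den:ℚ) := by exact_mod_cast a.pos
    have hdb : (0:ℚ) < (b.den:ℚ) := by exact_mod_cast b.pos
    refine ⟨a.num.toNat * b.den - 1, b.num.toNat * a.den - 1,
      1/((a.den:ℚ)*(b.den:ℚ)), by positivity, ?_, ?_⟩
    · have h1 : 1 ≤ a.num.toNat * b.den :=
        Nat.one_le_iff_ne_zero.mpr (Nat.mul_ne_zero (by omega) b.den_nz)
      have hta : ((a.num.toNat : ℕ) : ℚ) = (a.num : ℚ) := by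
        exact_mod_cast Int.toNat_of_nonneg hna.le
      have h2 : ((a.num.toNat * b.den - 1 : ℕ) : ℚ) + 1
          = ((a.num:ℚ)) * (b.den:ℚ) := by
        push_cast [h1]
        rw [hta]; ring
      rw [h2]
      have h3 : (a.num:ℚ) = a * (a.den:ℚ) :=
        (div_eq_iff (ne_of_gt hda)).mp (Rat.num_div_den a)
      field_simp
      linear_combination -h3
    · have h1 : 1 ≤ b.num.toNat * a.den :=
        Nat.one_le_iff_ne_zero.mpr (Nat.mul_ne_zero (by omega) a.den_nz)
      have htb : ((b.num.toNat : ℕ) : ℚ) = (b.num : ℚ) := by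
        exact_mod_cast Int.toNat_of_nonneg hnb.le
      have h2 : ((b.num.toNat * a.den - 1 : ℕ) : ℚ) + 1
          = ((b.num:ℚ)) * (a.den:ℚ) := by
        push_cast [h1]
        rw [htb]; ring
      rw [h2]
      have h3 : (b.num:ℚ) = b * (b.den:ℚ) :=
        (div_eq_iff (ne_of_gt hdb)).mp (Rat.num_div_den b)
      field_simp
      linear_combination -h3
  clear ha hb hs
  -- notation
  set QA : ℚ := (A:ℚ) + 1 with hQA
  set QB : ℚ := (B:ℚ) + 1 with hQB
  set Sq : ℚ := (s':ℚ) + 1 with hSq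
  set M : ℚ := 3*Sq*(QA+QB) with hM
  set d : ℚ := 3*QB*Sq with hd
  set lam : ℚ := QA*g*d*M*(M+1) with hlam
  have hA0 : (0:ℚ) < QA := by positivity
  have hB0 : (0:ℚ) < QB := by positivity
  have hS0 : (0:ℚ) < Sq := by positivity
  have hd0 : (0:ℚ) < d := by rw [hd]; positivity
  have hM0 : (0:ℚ) < M := by rw [hM]; positivity
  have hM1 : (0:ℚ) < M + 1 := by linarith
  have hl0 : (0:ℚ) < lam := by
    rw [hlam]; exact mul_pos (mul_pos (mul_pos (mul_pos hA0 hg) hd0) hM0) hM1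
  have hMd : M - d = 3*QA*Sq := by rw [hM, hd]; ring
  set c1 : ℚ := lam/((1+d)*(1+M)*(2+M)) / (3*(QA+QB))^3 with hc1
  set c2 : ℚ := lam/(d*(d+1)*(3*QA*Sq)*(3*QA*Sq+1)) / (3*(QA+QB))^3 with hc2
  set c3 : ℚ := lam/((M+1)*(M+2)*(3*QA*Sq+1)) / (3*(QA+QB))^3 with hc3
  clear_value QA QB Sq M d lam c1 c2 c3
  have pos1 : 0 < c1 := by
    rw [hc1]
    have h1 : (0:ℚ) < (1+d)*(1+M)*(2+M) := by positivity
    have h2 : (0:ℚ) < ((3:ℚ)*(QA+QB))^3 := by positivity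
    exact div_pos (div_pos hl0 h1) h2
  have pos2 : 0 < c2 := by
    rw [hc2]
    have h1 : (0:ℚ) < d*(d+1)*(3*QA*Sq)*(3*QA*Sq+1) := by
      have ha1 : (0:ℚ) < 3*QA*Sq := by positivity
      have ha2 : (0:ℚ) < d+1 := by linarith
      positivity
    have h2 : (0:ℚ) < ((3:ℚ)*(QA+QB))^3 := by positivity
    exact div_pos (div_pos hl0 h1) h2
  have pos3 : 0 < c3 := by
    rw [hc3]
    have h1 : (0:ℚ) < (M+1)*(M+2)*(3*QA*Sq+1) := by positivity
    have h2 : (0:ℚ) < ((3:ℚ)*(QA+QB))^3 := by positivity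
    exact div_pos (div_pos hl0 h1) h2
  have bd2 : 3*(B+1)*(s'+1)+1 < p*(3*(A+B+2)) := by
    have h : (s'+2)*(3*(A+B+2)) ≤ p*(3*(A+B+2)) :=
      Nat.mul_le_mul_right _ (by omega)
    nlinarith [h]
  have bd3 : 3*(A+1)*(s'+1) + 3*(B+1)*(s'+1) + 2 < p*(3*(A+B+2)) := by
    have h : (s'+2)*(3*(A+B+2)) ≤ p*(3*(A+B+2)) :=
      Nat.mul_le_mul_right _ (by omega)
    nlinarith [h]
  have bd1 : 0 < p*(3*(A+B+2)) := by omega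
  have hmain : ∀ n : ℚ, a*((p:ℚ)*n)^3 + b*((p:ℚ)*n+((s'+1:ℕ):ℚ))^3 =
      c1*((p:ℚ)*((3*(A+B+2):ℕ):ℚ)*n + ((0:ℕ):ℚ) + ((-1:ℤ):ℚ))^3
      + c2*((p:ℚ)*((3*(A+B+2):ℕ):ℚ)*n + ((3*(B+1)*(s'+1)+1:ℕ):ℚ) + ((-1:ℤ):ℚ))^3
      + c3*((p:ℚ)*((3*(A+B+2):ℕ):ℚ)*n
          + ((3*(A+1)*(s'+1) + 3*(B+1)*(s'+1) + 2:ℕ):ℚ) + ((-1:ℤ):ℚ))^3 := by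
    intro n
    have hQk : (((3*(A+B+2) : ℕ)):ℚ) = 3*(QA+QB) := by
      rw [hQA, hQB]; push_cast; ring
    have hi2 : (((3*(B+1)*(s'+1)+1 : ℕ)):ℚ) = d + 1 := by
      rw [hd, hQB, hSq]; push_cast; ring
    have hi3 : (((3*(A+1)*(s'+1) + 3*(B+1)*(s'+1) + 2 : ℕ)):ℚ) = M + 2 := by
      rw [hM, hQA, hQB, hSq]; push_cast; ring
    have hsc : ((s' + 1 : ℕ):ℚ) = Sq := by rw [hSq]; push_cast; ring
    have ht : (((-1:ℤ)):ℚ) = -1 := by norm_num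
    rw [hQk, hi2, hi3, hsc, ht, ea, eb]
    have hQAne : QA ≠ 0 := ne_of_gt hA0
    have hdne : (1+d) ≠ 0 := by positivity
    have hMne : (1+M) ≠ 0 := by positivity
    have hM2ne : (2+M) ≠ 0 := by positivity
    have hd0ne : d ≠ 0 := ne_of_gt hd0
    have hd1ne : (d+1) ≠ 0 := by positivity
    have hASne : (3*QA*Sq) ≠ 0 := by positivity
    have hAS1ne : (3*QA*Sq+1) ≠ 0 := by positivity
    have hM1ne : (M+1) ≠ 0 := by positivity
    have hM2ne' : (M+2) ≠ 0 := by positivity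
    have hQne : (3*(QA+QB)) ≠ 0 := by positivity
    have key := main_id QA QB Sq g M d lam c1 c2 c3 ((p:ℚ)*n)
      hA0 hB0 hS0 hM hd hlam hc1 hc2 hc3
    linear_combination key
  exact ⟨3*(A+B+2), by omega, (-1 : ℤ), c1, c2, c3, pos1, pos2, pos3,
    0, 3*(B+1)*(s'+1)+1, 3*(A+1)*(s'+1) + 3*(B+1)*(s'+1) + 2,
    by omega, by omega, by omega, bd1, bd2, bd3, hmain⟩
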